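/- Let Γ be an m×m real symmetric positive definite matrix, let U be an m×m real matrix with Uᵀ Γ⁻¹ U = I, and let Λ = diag(λ₁, …, λ_m) with λ₁ ≥ λ₂ ≥ … ≥ λ_m ≥ 0. Set F_ss := Γ⁻¹ U Λ Uᵀ Γ⁻¹ + Γ⁻¹. For 1 ≤ k < m let U_k be the m×k matrix consisting of the first k columns of U and Λ_k = diag(λ₁, …, λ_k). Then for M = Γ and for M = Γ⁻¹, the truncation error satisfies ‖F_ss − (Γ⁻¹ + Γ⁻¹ U_k Λ_k U_kᵀ Γ⁻¹)‖_M ≤ λ_{k+1} ‖Γ⁻¹‖₂. -/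

import Mathlib

open Matrix

/-- The vector `M`-norm `‖x‖_M = √(xᵀ M x)`. -/
noncomputable def vecMNorm {m : ℕ} (M : Matrix (Fin m) (Fin m) ℝ) (x : Fin m → ℝ) : ℝ :=
  Real.sqrt (x ⬝ᵥ (M *ᵥ x))

/-- The induced matrix `M`-norm `‖A‖_M = sup_{x ≠ 0} ‖A x‖_M / ‖x‖_M`. -/
noncomputable def matMNorm {m : ℕ} (M A : Matrix (Fin m) (Fin m) ℝ) : ℝ :=
  ⨆ x : {x : Fin m → ℝ // x ≠ 0}, vecMNorm M (A *ᵥ (x : Fin m → ℝ)) / vecMNorm M (x : Fin m → ℝ)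

/-- The spectral norm (operator norm induced by the Euclidean vector norm). -/
noncomputable def specNorm {m : ℕ} (A : Matrix (Fin m) (Fin m) ℝ) : ℝ :=
  ‖Matrix.toEuclideanCLM (𝕜 := ℝ) A‖

namespace Stmt3Aux

variable {m : ℕ}

lemma qform (A M : Matrix (Fin m) (Fin m) ℝ) (u v : Fin m → ℝ) :
    (A *ᵥ u) ⬝ᵥ (M *ᵥ v) = u ⬝ᵥ ((Aᵀ * M) *ᵥ v) := by
  rw [Matrix.dotProduct_mulVec, Matrix.vecMul_mulVec, ← Matrix.dotProduct_mulVec]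

lemma genCS {P : Matrix (Fin m) (Fin m) ℝ} (hP : P.PosSemidef) (u v : Fin m → ℝ) :
    (u ⬝ᵥ (P *ᵥ v))^2 ≤ (u ⬝ᵥ (P *ᵥ u)) * (v ⬝ᵥ (P *ᵥ v)) := by
  open scoped MatrixOrder in
  obtain ⟨C, rfl⟩ := CStarAlgebra.nonneg_iff_eq_star_mul_self.mp (Matrix.nonneg_iff_posSemidef.mpr hP)
  rw [Matrix.star_eq_conjTranspose]
  have h : ∀ a b : Fin m → ℝ, a ⬝ᵥ ((Cᴴ * C) *ᵥ b) = (C *ᵥ a) ⬝ᵥ (C *ᵥ b) := by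
    intro a b
    rw [Matrix.conjTranspose_eq_transpose_of_trivial]
    rw [← qform C C a b]
  rw [h u v, h u u, h v v]
  simpa [dotProduct, sq] using Finset.sum_mul_sq_le_sq_mul_sq Finset.univ (C *ᵥ u) (C *ᵥ v)

lemma opBound (B : Matrix (Fin m) (Fin m) ℝ) (u : Fin m → ℝ) :
    u ⬝ᵥ (B *ᵥ u) ≤ specNorm B * (u ⬝ᵥ u) := by
  set e := (WithLp.equiv 2 (Fin m → ℝ)).symm with he
  have hdot : ∀ a b : Fin m → ℝ, a ⬝ᵥ b = inner ℝ (e a) (e b) := by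
    intro a b
    simp [EuclideanSpace.inner_eq_star_dotProduct, dotProduct, mul_comm, he,
      WithLp.equiv_symm_apply, PiLp.toLp_apply]
  have hact : Matrix.toEuclideanCLM (𝕜 := ℝ) B (e u) = e (B *ᵥ u) := by
    rw [he, WithLp.equiv_symm_apply]
    simp [Matrix.toLin'_apply]
  have h1 : u ⬝ᵥ (B *ᵥ u) ≤ ‖e u‖ * ‖e (B *ᵥ u)‖ := by
    rw [hdot]
    exact real_inner_le_norm _ _
  have h2 : ‖e (B *ᵥ u)‖ ≤ specNorm B * ‖e u‖ := by
    rw [← hact]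
    exact (Matrix.toEuclideanCLM (𝕜 := ℝ) B).le_opNorm _
  have h3 : ‖e u‖ * ‖e u‖ = u ⬝ᵥ u := by
    rw [hdot, real_inner_self_eq_norm_mul_norm]
  have hs : (0:ℝ) ≤ specNorm B := norm_nonneg _
  nlinarith [mul_le_mul_of_nonneg_left h2 (norm_nonneg (e u)), norm_nonneg (e u)]

lemma alg {a b c K : ℝ} (ha : 0 ≤ a) (hc : 0 ≤ c) (hK : 0 ≤ K)
    (h1 : b^2 ≤ a*c) (h2 : c ≤ K*b) : c ≤ K^2*a := by
  rcases eq_or_lt_of_le hc with h|h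
  · nlinarith
  · nlinarith [mul_le_mul_of_nonneg_right h2 hc, mul_le_mul_of_nonneg_left h1 (mul_nonneg hK hK)]

lemma psd_form {P : Matrix (Fin m) (Fin m) ℝ} (hP : P.PosSemidef) (x : Fin m → ℝ) :
    0 ≤ x ⬝ᵥ (P *ᵥ x) := by simpa [star_trivial] using hP.dotProduct_mulVec_nonneg x

lemma posdef_form {P : Matrix (Fin m) (Fin m) ℝ} (hP : P.PosDef) {x : Fin m → ℝ}
    (hx : x ≠ 0) : 0 < x ⬝ᵥ (P *ᵥ x) := by simpa [star_trivial] using hP.dotProduct_mulVec_pos hx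

lemma moment1 {Γ : Matrix (Fin m) (Fin m) ℝ} (hΓ : Γ.PosDef) (x : Fin m → ℝ) :
    x ⬝ᵥ (Γ⁻¹ *ᵥ x) ≤ specNorm Γ⁻¹ ^ 2 * (x ⬝ᵥ (Γ *ᵥ x)) := by
  have hB : (Γ⁻¹).PosDef := hΓ.inv
  have hΓB : Γ * Γ⁻¹ = 1 := Matrix.mul_nonsing_inv Γ (isUnit_iff_ne_zero.mpr hΓ.det_pos.ne')
  have hcs := genCS hΓ.posSemidef x (Γ⁻¹ *ᵥ x)
  rw [Matrix.mulVec_mulVec, hΓB, Matrix.one_mulVec, dotProduct_comm (Γ⁻¹ *ᵥ x) x] at hcs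
  exact alg (psd_form hΓ.posSemidef x) (psd_form hB.posSemidef x) (norm_nonneg _)
    hcs (opBound Γ⁻¹ x)

lemma moment2 {B : Matrix (Fin m) (Fin m) ℝ} (hB : B.PosDef) (w : Fin m → ℝ) :
    (B *ᵥ w) ⬝ᵥ (B *ᵥ (B *ᵥ w)) ≤ specNorm B ^ 2 * (w ⬝ᵥ (B *ᵥ w)) := by
  have hBt : Bᵀ = B := by
    rw [← Matrix.conjTranspose_eq_transpose_of_trivial]; exact hB.isHermitian
  have hcs := genCS hB.posSemidef w (B *ᵥ w)
  have hb : (B *ᵥ w) ⬝ᵥ (B *ᵥ w) = w ⬝ᵥ (B *ᵥ (B *ᵥ w)) := by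
    rw [qform B B w w, hBt, ← Matrix.mulVec_mulVec]
  have hop := opBound B (B *ᵥ w)
  rw [hb] at hop
  have hc : 0 ≤ (B *ᵥ w) ⬝ᵥ (B *ᵥ (B *ᵥ w)) := psd_form hB.posSemidef (B *ᵥ w)
  exact alg (psd_form hB.posSemidef w) hc (norm_nonneg _) hcs hop

lemma sum_castLE {m k : ℕ} (hk : k ≤ m) (f : Fin m → ℝ) :
    ∑ c : Fin m, (if (c:ℕ) < k then f c else 0)
      = ∑ c : Fin k, f (Fin.castLE hk c) := by
  rw [← Finset.sum_filter]
  rw [show Finset.filter (fun c : Fin m => (c:ℕ) < k) Finset.univ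
      = Finset.univ.map (Fin.castLEEmb hk) by
    ext c
    simp only [Finset.mem_filter, Finset.mem_univ, true_and, Finset.mem_map,
      Fin.castLEEmb, Function.Embedding.coeFn_mk]
    constructor
    · intro h; exact ⟨⟨c, h⟩, rfl⟩
    · rintro ⟨a, rfl⟩; exact a.2]
  rw [Finset.sum_map]
  rfl

lemma subm_eq {m k : ℕ} (hk : k ≤ m) (U : Matrix (Fin m) (Fin m) ℝ) (lam : Fin m → ℝ) :
    U.submatrix id (Fin.castLE hk) *
        Matrix.diagonal (fun i : Fin k => lam (Fin.castLE hk i)) *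
        (U.submatrix id (Fin.castLE hk))ᵀ
      = U * Matrix.diagonal (fun i : Fin m => if (i:ℕ) < k then lam i else 0) * Uᵀ := by
  ext i j
  conv_lhs => rw [Matrix.mul_apply]
  conv_rhs => rw [Matrix.mul_apply]
  simp only [Matrix.mul_diagonal, Matrix.transpose_apply,
    Matrix.submatrix_apply, id_eq, mul_ite, ite_mul, mul_zero, zero_mul]
  rw [sum_castLE hk (fun c => U i c * lam c * U j c)]

end Stmt3Aux

open Stmt3Aux in
/-- truncation error of the low-rank approximation of
`F_ss = Γ⁻¹ U Λ Uᵀ Γ⁻¹ + Γ⁻¹`: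
`‖F_ss − (Γ⁻¹ + Γ⁻¹ U_k Λ_k U_kᵀ Γ⁻¹)‖_M ≤ λ_{k+1} ‖Γ⁻¹‖₂` for `M = Γ` and `M = Γ⁻¹`. -/
theorem stmt_3 {m k : ℕ} (Γ U : Matrix (Fin m) (Fin m) ℝ) (lam : Fin m → ℝ)
    (hΓ : Γ.PosDef) (hU : Uᵀ * Γ⁻¹ * U = 1)
    (hdec : ∀ i j : Fin m, i ≤ j → lam j ≤ lam i) (hnonneg : ∀ i, 0 ≤ lam i)
    (hk1 : 1 ≤ k) (hk : k < m) :
    ∀ M : Matrix (Fin m) (Fin m) ℝ, (M = Γ ∨ M = Γ⁻¹) →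
      matMNorm M
        ((Γ⁻¹ * U * Matrix.diagonal lam * Uᵀ * Γ⁻¹ + Γ⁻¹) -
          (Γ⁻¹ + Γ⁻¹ * (U.submatrix id (Fin.castLE hk.le)) *
            Matrix.diagonal (fun i : Fin k => lam (Fin.castLE hk.le i)) *
            (U.submatrix id (Fin.castLE hk.le))ᵀ * Γ⁻¹)) ≤
        lam ⟨k, hk⟩ * specNorm Γ⁻¹ := by
  intro M hM
  have hm : 0 < m := lt_of_le_of_lt (Nat.zero_le k) hk
  have hB : (Γ⁻¹).PosDef := hΓ.inv
  have hBt : (Γ⁻¹)ᵀ = Γ⁻¹ := by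
    rw [← Matrix.conjTranspose_eq_transpose_of_trivial]; exact hB.isHermitian
  have hΓdet : IsUnit Γ.det := isUnit_iff_ne_zero.mpr hΓ.det_pos.ne'
  have hΓB : Γ * Γ⁻¹ = 1 := Matrix.mul_nonsing_inv Γ hΓdet
  have hBΓ : Γ⁻¹ * Γ = 1 := Matrix.nonsing_inv_mul Γ hΓdet
  -- U is invertible
  have hUdet : IsUnit U.det := by
    have h := congrArg Matrix.det hU
    rw [Matrix.det_mul, Matrix.det_mul, Matrix.det_transpose, Matrix.det_one] at h
    rw [mul_assoc] at h
    exact IsUnit.of_mul_eq_one _ h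
  have hUU : U * U⁻¹ = 1 := Matrix.mul_nonsing_inv U hUdet
  -- the residual diagonal, made opaque
  obtain ⟨lam', hlam'⟩ : ∃ f : Fin m → ℝ,
      f = fun i : Fin m => if (i:ℕ) < k then 0 else lam i := ⟨_, rfl⟩
  have hlam'_bound : ∀ i, lam' i ^ 2 ≤ lam ⟨k, hk⟩ ^ 2 := by
    intro i
    rw [hlam']
    by_cases h : (i:ℕ) < k
    · simp only [h, if_true]
      have := hnonneg (⟨k, hk⟩ : Fin m)
      nlinarith
    · simp only [h, if_false]
      have hle : (⟨k, hk⟩ : Fin m) ≤ i := by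
        rw [Fin.le_def]
        exact Nat.le_of_not_lt h
      have hh := hdec ⟨k, hk⟩ i hle
      nlinarith [hnonneg i]
  -- rewrite the error matrix
  have hsub := subm_eq hk.le U lam
  have hEeq : (Γ⁻¹ * U * Matrix.diagonal lam * Uᵀ * Γ⁻¹ + Γ⁻¹) -
      (Γ⁻¹ + Γ⁻¹ * (U.submatrix id (Fin.castLE hk.le)) *
        Matrix.diagonal (fun i : Fin k => lam (Fin.castLE hk.le i)) *
        (U.submatrix id (Fin.castLE hk.le))ᵀ * Γ⁻¹)
      = Γ⁻¹ * U * Matrix.diagonal lam' * Uᵀ * Γ⁻¹ := by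
    have h2 : Γ⁻¹ * (U.submatrix id (Fin.castLE hk.le)) *
        Matrix.diagonal (fun i : Fin k => lam (Fin.castLE hk.le i)) *
        (U.submatrix id (Fin.castLE hk.le))ᵀ * Γ⁻¹
        = Γ⁻¹ * (U * Matrix.diagonal (fun i : Fin m => if (i:ℕ) < k then lam i else 0) * Uᵀ)
            * Γ⁻¹ := by
      rw [← hsub]; simp only [Matrix.mul_assoc]
    rw [h2]
    have h3 : Matrix.diagonal lam
        = Matrix.diagonal (fun i : Fin m => if (i:ℕ) < k then lam i else 0)
            + Matrix.diagonal lam' := by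
      ext a b
      rcases eq_or_ne a b with rfl|hab
      · simp only [Matrix.add_apply, Matrix.diagonal_apply_eq, hlam']
        by_cases h : (a:ℕ) < k <;> simp [h]
      · simp [Matrix.add_apply, hlam', Matrix.diagonal_apply_ne _ hab]
    rw [h3]
    noncomm_ring
  rw [hEeq]
  -- key product identities
  have hUBU : Uᵀ * (Γ⁻¹ * U) = 1 := by rw [← Matrix.mul_assoc]; exact hU
  have hEU : (Γ⁻¹ * U * Matrix.diagonal lam' * Uᵀ * Γ⁻¹) * U
      = Γ⁻¹ * U * Matrix.diagonal lam' := by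
    calc (Γ⁻¹ * U * Matrix.diagonal lam' * Uᵀ * Γ⁻¹) * U
        = Γ⁻¹ * U * Matrix.diagonal lam' * (Uᵀ * (Γ⁻¹ * U)) := by
          simp only [Matrix.mul_assoc]
      _ = Γ⁻¹ * U * Matrix.diagonal lam' := by rw [hUBU, Matrix.mul_one]
  -- positivity of M
  have hMpd : M.PosDef := by rcases hM with h|h <;> rw [h]; exacts [hΓ, hB]
  -- the sup
  rw [matMNorm]
  haveI : Nonempty {x : Fin m → ℝ // x ≠ 0} :=
    ⟨⟨fun _ => 1, fun h => one_ne_zero (congrFun h ⟨0, hm⟩)⟩⟩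
  apply ciSup_le
  rintro ⟨x, hx⟩
  simp only
  have hK0 : (0:ℝ) ≤ specNorm Γ⁻¹ := norm_nonneg _
  have hlamk0 : 0 ≤ lam ⟨k, hk⟩ := hnonneg _
  -- substitution x = U s
  obtain ⟨s, hxs⟩ : ∃ s, U *ᵥ s = x :=
    ⟨U⁻¹ *ᵥ x, by rw [Matrix.mulVec_mulVec, hUU, Matrix.one_mulVec]⟩
  have hEx : (Γ⁻¹ * U * Matrix.diagonal lam' * Uᵀ * Γ⁻¹) *ᵥ x
      = (Γ⁻¹ * U * Matrix.diagonal lam') *ᵥ s := by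
    rw [← hxs, Matrix.mulVec_mulVec, hEU]
  -- denominator
  have hden_pos : 0 < x ⬝ᵥ (M *ᵥ x) := posdef_form hMpd hx
  -- s ⬝ᵥ s = x ⬝ᵥ Γ⁻¹ x
  have hUBUvec : ∀ t : Fin m → ℝ, (U *ᵥ t) ⬝ᵥ (Γ⁻¹ *ᵥ (U *ᵥ t)) = t ⬝ᵥ t := by
    intro t
    rw [Matrix.mulVec_mulVec, qform U (Γ⁻¹ * U) t t, hUBU, Matrix.one_mulVec]
  have hss : x ⬝ᵥ (Γ⁻¹ *ᵥ x) = s ⬝ᵥ s := by rw [← hxs]; exact hUBUvec s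
  -- sum bound
  have hsum : ∑ i, (lam' i ^ 2) * s i ^ 2 ≤ lam ⟨k, hk⟩ ^ 2 * (s ⬝ᵥ s) := by
    rw [dotProduct, Finset.mul_sum]
    refine Finset.sum_le_sum fun i _ => ?_
    have := hlam'_bound i
    nlinarith [sq_nonneg (s i)]
  -- main bound on the numerator
  have hnum : ((Γ⁻¹ * U * Matrix.diagonal lam') *ᵥ s) ⬝ᵥ
        (M *ᵥ ((Γ⁻¹ * U * Matrix.diagonal lam') *ᵥ s))
      ≤ (lam ⟨k, hk⟩ * specNorm Γ⁻¹)^2 * (x ⬝ᵥ (M *ᵥ x)) := by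
    rcases hM with h|h
    · -- M = Γ
      rw [h]
      have hmat : (Γ⁻¹ * U * Matrix.diagonal lam')ᵀ * (Γ * (Γ⁻¹ * U * Matrix.diagonal lam'))
          = Matrix.diagonal lam' * Matrix.diagonal lam' := by
        have ht : (Γ⁻¹ * U * Matrix.diagonal lam')ᵀ
            = Matrix.diagonal lam' * Uᵀ * Γ⁻¹ := by
          simp only [Matrix.transpose_mul, hBt, Matrix.diagonal_transpose, Matrix.mul_assoc]
        rw [ht]
        calc Matrix.diagonal lam' * Uᵀ * Γ⁻¹ * (Γ * (Γ⁻¹ * U * Matrix.diagonal lam'))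
            = Matrix.diagonal lam' * (Uᵀ * ((Γ⁻¹ * Γ) * (Γ⁻¹ * (U * Matrix.diagonal lam')))) := by
              simp only [Matrix.mul_assoc]
          _ = Matrix.diagonal lam' * (Uᵀ * (Γ⁻¹ * (U * Matrix.diagonal lam'))) := by
              rw [hBΓ, Matrix.one_mul]
          _ = Matrix.diagonal lam' * ((Uᵀ * (Γ⁻¹ * U)) * Matrix.diagonal lam') := by
              simp only [Matrix.mul_assoc]
          _ = Matrix.diagonal lam' * Matrix.diagonal lam' := by rw [hUBU, Matrix.one_mul]
      have e1 : ((Γ⁻¹ * U * Matrix.diagonal lam') *ᵥ s) ⬝ᵥ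
            (Γ *ᵥ ((Γ⁻¹ * U * Matrix.diagonal lam') *ᵥ s))
          = s ⬝ᵥ ((Matrix.diagonal lam' * Matrix.diagonal lam') *ᵥ s) := by
        rw [Matrix.mulVec_mulVec,
          qform (Γ⁻¹ * U * Matrix.diagonal lam') (Γ * (Γ⁻¹ * U * Matrix.diagonal lam')) s s,
          hmat]
      rw [e1]
      have e2 : s ⬝ᵥ ((Matrix.diagonal lam' * Matrix.diagonal lam') *ᵥ s)
          = ∑ i, (lam' i ^ 2) * s i ^ 2 := by
        rw [Matrix.diagonal_mul_diagonal]
        simp only [dotProduct, Matrix.mulVec_diagonal]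
        exact Finset.sum_congr rfl fun i _ => by ring
      rw [e2]
      refine hsum.trans ?_
      rw [← hss]
      have hmom := moment1 hΓ x
      calc lam ⟨k, hk⟩ ^ 2 * (x ⬝ᵥ (Γ⁻¹ *ᵥ x))
          ≤ lam ⟨k, hk⟩ ^ 2 * (specNorm Γ⁻¹ ^ 2 * (x ⬝ᵥ (Γ *ᵥ x))) := by
            exact mul_le_mul_of_nonneg_left hmom (by positivity)
        _ = (lam ⟨k, hk⟩ * specNorm Γ⁻¹)^2 * (x ⬝ᵥ (Γ *ᵥ x)) := by ring
    · -- M = Γ⁻¹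
      rw [h]
      have e1 : (Γ⁻¹ * U * Matrix.diagonal lam') *ᵥ s
          = Γ⁻¹ *ᵥ (U *ᵥ (Matrix.diagonal lam' *ᵥ s)) := by
        simp only [Matrix.mulVec_mulVec, Matrix.mul_assoc]
      rw [e1]
      have e2 := moment2 hB (U *ᵥ (Matrix.diagonal lam' *ᵥ s))
      refine e2.trans ?_
      have e3 : (U *ᵥ (Matrix.diagonal lam' *ᵥ s)) ⬝ᵥ
            (Γ⁻¹ *ᵥ (U *ᵥ (Matrix.diagonal lam' *ᵥ s)))
          = (Matrix.diagonal lam' *ᵥ s) ⬝ᵥ (Matrix.diagonal lam' *ᵥ s) :=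
        hUBUvec _
      have e4 : (Matrix.diagonal lam' *ᵥ s) ⬝ᵥ (Matrix.diagonal lam' *ᵥ s)
          = ∑ i, (lam' i ^ 2) * s i ^ 2 := by
        simp only [dotProduct, Matrix.mulVec_diagonal]
        exact Finset.sum_congr rfl fun i _ => by ring
      calc specNorm Γ⁻¹ ^ 2 * ((U *ᵥ (Matrix.diagonal lam' *ᵥ s)) ⬝ᵥ
              (Γ⁻¹ *ᵥ (U *ᵥ (Matrix.diagonal lam' *ᵥ s))))
          = specNorm Γ⁻¹ ^ 2 * ∑ i, (lam' i ^ 2) * s i ^ 2 := by rw [e3, e4]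
        _ ≤ specNorm Γ⁻¹ ^ 2 * (lam ⟨k, hk⟩ ^ 2 * (s ⬝ᵥ s)) := by
            exact mul_le_mul_of_nonneg_left hsum (by positivity)
        _ = (lam ⟨k, hk⟩ * specNorm Γ⁻¹)^2 * (x ⬝ᵥ (Γ⁻¹ *ᵥ x)) := by rw [hss]; ring
  -- conclude with square roots
  rw [vecMNorm, vecMNorm, hEx]
  rw [div_le_iff₀ (Real.sqrt_pos.mpr hden_pos)]
  calc Real.sqrt (((Γ⁻¹ * U * Matrix.diagonal lam') *ᵥ s) ⬝ᵥ
          (M *ᵥ ((Γ⁻¹ * U * Matrix.diagonal lam') *ᵥ s)))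
      ≤ Real.sqrt ((lam ⟨k, hk⟩ * specNorm Γ⁻¹)^2 * (x ⬝ᵥ (M *ᵥ x))) :=
        Real.sqrt_le_sqrt hnum
    _ = (lam ⟨k, hk⟩ * specNorm Γ⁻¹) * Real.sqrt (x ⬝ᵥ (M *ᵥ x)) := by
        rw [Real.sqrt_mul (sq_nonneg _), Real.sqrt_sq (mul_nonneg hlamk0 hK0)]
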